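/- Let q > 3 be an odd prime power and let C be a conjugacy class of elements of PSL(2,q) of order l with l ∉ {1, 2, p, 6}, where p is the characteristic. Then there exist elements x, y ∈ PSL(2,q) with x of order 2, y of order 3, and xy ∈ C. -/
import Mathlib

open Matrix

open scoped MatrixGroups

section Helpers

open Polynomial

variable {F : Type*} [Field F] [Fintype F]

private lemma sq_rep' (hF : Odd (Fintype.card F)) {α β : F} (hα : α ≠ 0) (hβ : β ≠ 0) (γ : F) :
    ∃ u w : F, α * u ^ 2 + β * w ^ 2 = γ := by
  have hf : degree (C α * X ^ 2 : F[X]) = 2 := by rw [degree_C_mul_X_pow 2 hα]; rfl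
  have hg : degree (C β * X ^ 2 - C γ : F[X]) = 2 := by
    rw [degree_sub_eq_left_of_degree_lt, degree_C_mul_X_pow 2 hβ]; rfl
    rw [degree_C_mul_X_pow 2 hβ]
    exact lt_of_le_of_lt (degree_C_le) (by norm_num)
  obtain ⟨u, w, h⟩ := FiniteField.exists_root_sum_quadratic hf hg (Nat.odd_iff.mp hF)
  refine ⟨u, w, ?_⟩
  simp only [eval_sub, eval_mul, eval_C, eval_pow, eval_X] at h
  linear_combination h

private lemma conic_sol (hF : Odd (Fintype.card F)) (t : F) :
    ∃ a b : F, a ^ 2 - a + (b ^ 2 + t * b + 1) = 0 := by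
  have hf : degree (X ^ 2 - X : F[X]) = 2 := by
    rw [degree_sub_eq_left_of_degree_lt] <;> simp
  have hlt : degree (C t * X + C 1 : F[X]) < degree (X ^ 2 : F[X]) := by
    refine lt_of_le_of_lt (Polynomial.degree_linear_le) ?_
    rw [degree_X_pow]; norm_num
  have hg : degree (X ^ 2 + (C t * X + C 1) : F[X]) = 2 := by
    rw [degree_add_eq_left_of_degree_lt hlt, degree_X_pow]; rfl
  obtain ⟨a, b, h⟩ := FiniteField.exists_root_sum_quadratic hf hg (Nat.odd_iff.mp hF)
  refine ⟨a, b, ?_⟩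
  simp only [eval_add, eval_sub, eval_mul, eval_C, eval_pow, eval_X, eval_one] at h
  linear_combination h

private lemma two_ne_zero'' (hF : Odd (Fintype.card F)) : (2 : F) ≠ 0 := by
  intro h
  have h2 : ringChar F ∣ 2 :=
    (CharP.cast_eq_zero_iff F (ringChar F) 2).mp (by exact_mod_cast h)
  have hch : ringChar F = 2 := by
    rcases (Nat.dvd_prime Nat.prime_two).mp h2 with h1 | h1
    · exact absurd h1 (CharP.ringChar_ne_one)
    · exact h1
  have := FiniteField.even_card_of_char_two hch
  rw [Nat.odd_iff] at hF; omega

private lemma ch2 (a b c d : F) (hA : a * d - b * c = 1) :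
    !![a,b;c,d] * !![a,b;c,d] = (a + d) • !![a,b;c,d] - 1 := by
  ext i j
  fin_cases i <;> fin_cases j <;>
    simp [Matrix.mul_apply, Fin.sum_univ_two, Matrix.one_apply] <;>
    (first | linear_combination -hA | ring)

private lemma unipotent_pow (N : Matrix (Fin 2) (Fin 2) F) (hN : N * N = 0) (m : ℕ) :
    (1 + N) ^ m = 1 + (m : F) • N := by
  induction m with
  | zero => simp
  | succ k ih =>
    rw [pow_succ, ih]
    have h1 : (1 + (k : F) • N) * (1 + N) = 1 + (k : F) • N + N + (k : F) • (N * N) := by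
      rw [mul_add, mul_one, add_mul, one_mul, smul_mul_assoc]; abel
    rw [h1, hN, smul_zero, add_zero]
    push_cast
    module

private lemma exists_conj_companion (hF : Odd (Fintype.card F))
    (A : Matrix (Fin 2) (Fin 2) F) (hA : A.det = 1)
    (h2 : A.trace ≠ 2) (h2' : A.trace ≠ -2) :
    ∃ P : Matrix (Fin 2) (Fin 2) F, P.det = 1 ∧ A * P = P * !![0, -1; 1, A.trace] := by
  obtain ⟨a, b, c, d, rfl⟩ : ∃ a b c d, A = !![a, b; c, d] :=
    ⟨_, _, _, _, Matrix.eta_fin_two A⟩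
  rw [Matrix.det_fin_two_of] at hA
  rw [Matrix.trace_fin_two_of] at h2 h2' ⊢
  have htwo : (2 : F) ≠ 0 := two_ne_zero'' hF
  have hD : (a + d) ^ 2 - 4 ≠ 0 := by
    intro h
    have : (a + d - 2) * (a + d + 2) = 0 := by linear_combination h
    rcases mul_eq_zero.mp this with h' | h'
    · exact h2 (by linear_combination h')
    · exact h2' (by linear_combination h')
  have key : ∃ v0 v1 : F, c * v0 ^ 2 + (d - a) * v0 * v1 - b * v1 ^ 2 = 1 := by
    by_cases hc : c = 0
    · have had : a * d = 1 := by linear_combination hA + b * hc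
      have hda : d - a ≠ 0 := by
        intro h
        have ha2 : a * a = 1 := by
          have : d = a := by linear_combination h
          rw [this] at had; linear_combination had
        rcases mul_self_eq_one_iff.mp ha2 with h' | h'
        · apply h2; rw [h']; linear_combination h + h'
        · apply h2'; rw [h']; linear_combination h + h'
      refine ⟨(1 + b) / (d - a), 1, ?_⟩
      field_simp
      linear_combination (1 + b)^2 * hc
    · have hβ : -c * ((a + d) ^ 2 - 4) ≠ 0 :=
        mul_ne_zero (neg_ne_zero.mpr hc) hD
      obtain ⟨u, w, huw⟩ := sq_rep' hF hc hβ 1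
      refine ⟨u + (a - d) * w, 2 * c * w, ?_⟩
      linear_combination huw + 4 * c * w ^ 2 * hA
  obtain ⟨v0, v1, hv⟩ := key
  refine ⟨!![v0, a * v0 + b * v1; v1, c * v0 + d * v1], ?_, ?_⟩
  · rw [Matrix.det_fin_two_of]; linear_combination hv
  · ext i j
    fin_cases i <;> fin_cases j <;>
      simp [Matrix.mul_apply, Fin.sum_univ_two] <;>
      (first | linear_combination -v0 * hA | linear_combination -v1 * hA | ring)

private lemma center_char (A : Matrix.SpecialLinearGroup (Fin 2) F) :
    A ∈ Subgroup.center (Matrix.SpecialLinearGroup (Fin 2) F) ↔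
      (A : Matrix (Fin 2) (Fin 2) F) = 1 ∨ (A : Matrix (Fin 2) (Fin 2) F) = -1 := by
  rw [Matrix.SpecialLinearGroup.mem_center_iff]
  constructor
  · rintro ⟨r, hr, hA⟩
    rw [Fintype.card_fin] at hr
    have : (r - 1) * (r + 1) = 0 := by linear_combination hr
    rcases mul_eq_zero.mp this with h' | h'
    · left
      have hr1 : r = 1 := by linear_combination h'
      rw [← hA, hr1]; simp
    · right
      have hr1 : r = -1 := by linear_combination h'
      rw [← hA, hr1]
      ext i j
      rcases eq_or_ne i j with rfl | hij
      · simp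
      · simp [Matrix.one_apply_ne hij, hij]
  · rintro (h | h)
    · exact ⟨1, by norm_num, by rw [h]; simp⟩
    · refine ⟨-1, by norm_num, ?_⟩
      rw [h]
      ext i j
      rcases eq_or_ne i j with rfl | hij
      · simp
      · simp [Matrix.one_apply_ne hij, hij]

private lemma isConj_SL (hF : Odd (Fintype.card F))
    (A B : Matrix.SpecialLinearGroup (Fin 2) F)
    (htr : (A : Matrix (Fin 2) (Fin 2) F).trace = (B : Matrix (Fin 2) (Fin 2) F).trace)
    (h2 : (A : Matrix (Fin 2) (Fin 2) F).trace ≠ 2)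
    (h2' : (A : Matrix (Fin 2) (Fin 2) F).trace ≠ -2) :
    IsConj A B := by
  obtain ⟨P, hP, hAP⟩ := exists_conj_companion hF _ A.2 h2 h2'
  obtain ⟨Q, hQ, hBQ⟩ := exists_conj_companion hF _ B.2 (htr ▸ h2) (htr ▸ h2')
  rw [← htr] at hBQ
  have hdetC : (!![0, -1; 1, (A : Matrix (Fin 2) (Fin 2) F).trace]).det = 1 := by
    rw [Matrix.det_fin_two_of]; ring
  set Csl : Matrix.SpecialLinearGroup (Fin 2) F := ⟨_, hdetC⟩ with hCsl
  set Psl : Matrix.SpecialLinearGroup (Fin 2) F := ⟨P, hP⟩ with hPsl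
  set Qsl : Matrix.SpecialLinearGroup (Fin 2) F := ⟨Q, hQ⟩ with hQsl
  have h1 : A * Psl = Psl * Csl := Subtype.ext (by
    rw [Matrix.SpecialLinearGroup.coe_mul, Matrix.SpecialLinearGroup.coe_mul]; exact hAP)
  have h2 : B * Qsl = Qsl * Csl := Subtype.ext (by
    rw [Matrix.SpecialLinearGroup.coe_mul, Matrix.SpecialLinearGroup.coe_mul]; exact hBQ)
  have hca : IsConj Csl A := isConj_iff.mpr ⟨Psl, by rw [← h1, mul_inv_cancel_right]⟩
  have hcb : IsConj Csl B := isConj_iff.mpr ⟨Qsl, by rw [← h2, mul_inv_cancel_right]⟩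
  exact hca.symm.trans hcb

end Helpers

theorem exists_x_y_with_product_in_class (F : Type*) [Field F] [Fintype F]
    (hodd : Odd (Fintype.card F)) (hq : 3 < Fintype.card F)
    (hp : (ringChar F).Prime)
    (l : ℕ) (hl : l ∉ ({1, 2, ringChar F, 6} : Set ℕ))
    (g : Matrix.ProjectiveSpecialLinearGroup (Fin 2) F) (hg : orderOf g = l) :
    ∃ x y : Matrix.ProjectiveSpecialLinearGroup (Fin 2) F,
      orderOf x = 2 ∧ orderOf y = 3 ∧ IsConj g (x * y) := by
  classical
  simp only [Set.mem_insert_iff, Set.mem_singleton_iff, not_or] at hl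
  obtain ⟨hl1, hl2, hlp, hl6⟩ := hl
  set SL := Matrix.SpecialLinearGroup (Fin 2) F
  set φ : SL →* Matrix.ProjectiveSpecialLinearGroup (Fin 2) F :=
    QuotientGroup.mk' (Subgroup.center SL) with hφ
  obtain ⟨A, hAg⟩ := QuotientGroup.mk'_surjective (Subgroup.center SL) g
  rw [← hφ] at hAg
  obtain ⟨a0, b0, c0, d0, hM⟩ : ∃ a b c d, (A : Matrix (Fin 2) (Fin 2) F) = !![a, b; c, d] :=
    ⟨_, _, _, _, Matrix.eta_fin_two _⟩
  have hdetA : a0 * d0 - b0 * c0 = 1 := by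
    have := A.2; rw [hM, Matrix.det_fin_two_of] at this; exact this
  set t : F := a0 + d0 with ht
  have htrA : (A : Matrix (Fin 2) (Fin 2) F).trace = t := by
    rw [hM, Matrix.trace_fin_two_of]
  have hchA : (A : Matrix (Fin 2) (Fin 2) F) * (A : Matrix (Fin 2) (Fin 2) F)
      = t • (A : Matrix (Fin 2) (Fin 2) F) - 1 := by
    rw [hM]; exact ch2 a0 b0 c0 d0 hdetA
  -- order facts about g
  have hφ_eq_one : ∀ B : SL, φ B = 1 ↔ ((B : Matrix (Fin 2) (Fin 2) F) = 1 ∨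
      (B : Matrix (Fin 2) (Fin 2) F) = -1) := by
    intro B
    rw [hφ, QuotientGroup.mk'_apply, QuotientGroup.eq_one_iff, center_char]
  -- t ≠ 0
  have ht0 : t ≠ 0 := by
    intro h
    have hA2 : (A : Matrix (Fin 2) (Fin 2) F) * (A : Matrix (Fin 2) (Fin 2) F) = -1 := by
      rw [hchA, h, zero_smul, zero_sub]
    have : g ^ 2 = 1 := by
      rw [← hAg, ← map_pow, hφ_eq_one]
      right
      rw [pow_two, Matrix.SpecialLinearGroup.coe_mul, hA2]
    have hdvd : l ∣ 2 := hg ▸ orderOf_dvd_of_pow_eq_one this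
    rcases (Nat.dvd_prime Nat.prime_two).mp hdvd with h' | h'
    · exact hl1 h'
    · exact hl2 h'
  -- char odd
  have htwo : (2 : F) ≠ 0 := two_ne_zero'' hodd
  have hpodd : Odd (ringChar F) := by
    refine hp.odd_of_ne_two ?_
    intro h
    have := FiniteField.even_card_of_char_two h
    rw [Nat.odd_iff] at hodd; omega
  -- t ≠ ±2
  have horderp : ∀ s : F, s = 2 ∨ s = -2 → t = s → False := by
    rintro s hs rfl
    have hgp : g ^ (ringChar F) = 1 := by
      rw [← hAg, ← map_pow, hφ_eq_one, Matrix.SpecialLinearGroup.coe_pow]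
      have hcast : ((ringChar F : ℕ) : F) = 0 := ringChar.Nat.cast_ringChar
      rcases hs with h | h
      · left
        have hN : ((A : Matrix (Fin 2) (Fin 2) F) - 1) * ((A : Matrix (Fin 2) (Fin 2) F) - 1)
            = 0 := by
          have expand : ((A : Matrix (Fin 2) (Fin 2) F) - 1) * ((A : Matrix (Fin 2) (Fin 2) F) - 1)
              = (A : Matrix (Fin 2) (Fin 2) F) * (A : Matrix (Fin 2) (Fin 2) F)
                - (A : Matrix (Fin 2) (Fin 2) F) - (A : Matrix (Fin 2) (Fin 2) F) + 1 := by
            noncomm_ring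
          rw [expand, hchA, h]
          module
        have hpow := unipotent_pow _ hN (ringChar F)
        rw [show (1 : Matrix (Fin 2) (Fin 2) F) + ((A : Matrix (Fin 2) (Fin 2) F) - 1)
          = (A : Matrix (Fin 2) (Fin 2) F) by abel] at hpow
        rw [hpow, hcast, zero_smul, add_zero]
      · right
        have hN : (-(A : Matrix (Fin 2) (Fin 2) F) - 1) * (-(A : Matrix (Fin 2) (Fin 2) F) - 1)
            = 0 := by
          have expand : (-(A : Matrix (Fin 2) (Fin 2) F) - 1) * (-(A : Matrix (Fin 2) (Fin 2) F) - 1)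
              = (A : Matrix (Fin 2) (Fin 2) F) * (A : Matrix (Fin 2) (Fin 2) F)
                + (A : Matrix (Fin 2) (Fin 2) F) + (A : Matrix (Fin 2) (Fin 2) F) + 1 := by
            noncomm_ring
          rw [expand, hchA, h]
          module
        have hpow := unipotent_pow _ hN (ringChar F)
        rw [show (1 : Matrix (Fin 2) (Fin 2) F) + (-(A : Matrix (Fin 2) (Fin 2) F) - 1)
          = -(A : Matrix (Fin 2) (Fin 2) F) by abel] at hpow
        rw [hcast, zero_smul, add_zero] at hpow
        rw [Odd.neg_pow hpodd] at hpow
        rw [← neg_eq_iff_eq_neg]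
        rw [← hpow]
    have hdvd : l ∣ ringChar F := hg ▸ orderOf_dvd_of_pow_eq_one hgp
    rcases (Nat.dvd_prime hp).mp hdvd with h' | h'
    · exact hl1 h'
    · exact hlp h'
  have ht2 : t ≠ 2 := fun h => horderp 2 (Or.inl rfl) h
  have ht2' : t ≠ -2 := fun h => horderp (-2) (Or.inr rfl) h
  -- construct x and y
  obtain ⟨a, b, hconic⟩ := conic_sol hodd t
  set c : F := b + t with hc
  have hdetY : a * (1 - a) - b * c = 1 := by
    rw [hc]; linear_combination -hconic
  set Y : Matrix (Fin 2) (Fin 2) F := !![a, b; c, 1 - a] with hY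
  set X0 : Matrix (Fin 2) (Fin 2) F := !![0, 1; -1, 0] with hX0
  have hdetYm : Y.det = 1 := by rw [hY, Matrix.det_fin_two_of]; linear_combination hdetY
  have hdetX0 : X0.det = 1 := by rw [hX0, Matrix.det_fin_two_of]; ring
  set Xs : SL := ⟨X0, hdetX0⟩ with hXs
  set Ys : SL := ⟨Y, hdetYm⟩ with hYs
  set x := φ Xs with hx
  set y := φ Ys with hy
  refine ⟨x, y, ?_, ?_, ?_⟩
  · -- order of x is 2
    haveI : Fact (Nat.Prime 2) := ⟨Nat.prime_two⟩
    refine orderOf_eq_prime ?_ ?_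
    · rw [hx, ← map_pow, hφ_eq_one, Matrix.SpecialLinearGroup.coe_pow]
      right
      rw [pow_two, hXs]
      show X0 * X0 = -1
      rw [hX0]
      ext i j
      fin_cases i <;> fin_cases j <;>
        simp [Matrix.mul_apply, Fin.sum_univ_two, Matrix.one_apply]
    · rw [hx, Ne, hφ_eq_one]
      rintro (h | h) <;>
      · have := congrFun (congrFun h 0) 1
        simp [hXs, hX0, Matrix.one_apply] at this
  · -- order of y is 3
    haveI : Fact (Nat.Prime 3) := ⟨Nat.prime_three⟩
    have hY2 : Y * Y = Y - 1 := by
      have := ch2 a b c (1 - a) hdetY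
      rw [show a + (1 - a) = (1 : F) by ring, one_smul] at this
      rw [hY]; exact this
    have hY3 : Y * Y * Y = -1 := by
      rw [hY2, sub_mul, one_mul, hY2]; abel
    refine orderOf_eq_prime ?_ ?_
    · rw [hy, ← map_pow, hφ_eq_one, Matrix.SpecialLinearGroup.coe_pow]
      right
      rw [pow_succ, pow_two, hYs]
      show Y * Y * Y = -1
      exact hY3
    · rw [hy, Ne, hφ_eq_one]
      have hbc : c - b = t := by rw [hc]; ring
      rintro (h | h) <;>
      · rw [hYs] at h
        have h01 := congrFun (congrFun h 0 : _) 1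
        have h10 := congrFun (congrFun h 1 : _) 0
        simp [hY, Matrix.one_apply] at h01 h10
        apply ht0
        rw [← hbc, h01, h10]; ring
  · -- conjugacy
    have hZdet := (Xs * Ys).2
    have htrZ : ((Xs * Ys : SL) : Matrix (Fin 2) (Fin 2) F).trace = t := by
      rw [Matrix.SpecialLinearGroup.coe_mul]
      show (X0 * Y).trace = t
      rw [hX0, hY]
      have : (!![0, 1; -1, 0] * !![a, b; c, 1 - a] : Matrix (Fin 2) (Fin 2) F)
          = !![c, 1 - a; -a, -b] := by
        ext i j
        fin_cases i <;> fin_cases j <;>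
          simp [Matrix.mul_apply, Fin.sum_univ_two]
      rw [this, Matrix.trace_fin_two_of, hc]; ring
    have hconj : IsConj A (Xs * Ys) := by
      refine isConj_SL hodd A (Xs * Ys) ?_ ?_ ?_
      · rw [htrA, htrZ]
      · rw [htrA]; exact ht2
      · rw [htrA]; exact ht2'
    have hfinal := φ.map_isConj hconj
    rw [_root_.map_mul, hAg] at hfinal
    exact hfinal
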